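/- arXiv:1909.03145 — 5 statements merged into one kernel-verified Lean document; each statement's English description precedes it below -/
import Mathlib

section
/- Let V be a real Hilbert space, 0 ≤ μ ≤ L with L > 0, let f ∈ S^{1,1}_{μ,L}, let g : V → ℝ be convex, F = f + g, and let x* be a global minimizer of F. Let γ_0 > 0 and consider OAG Method-I: for each k ≥ 0, α_k > 0 satisfies L·α_k² = γ_k(1 + α_k); γ_{k+1} = (γ_k + μα_k)/(1 + α_k); y_k = (x_k + α_k v_k)/(1 + α_k); G_k ∈ V satisfies g(z) ≥ g(y_k − G_k/L) + ⟨G_k − ∇f(y_k), z − (y_k − G_k/L)⟩ for all z ∈ V; x_{k+1} = y_k − (1/L)G_k; and v_{k+1} = (γ_k v_k + μα_k y_k − α_k G_k)/(γ_k + μα_k). Then for every k ≥ 0, 𝓛_{k+1} ≤ 𝓛_k/(1 + α_k), where 𝓛_k = F(x_k) − F(x*) + (γ_k/2)‖v_k − x*‖². -/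
open RealInnerProductSpace

lemma smooth_upper {V : Type*} [NormedAddCommGroup V] [InnerProductSpace ℝ V] [CompleteSpace V]
    (L : ℝ) (hL : 0 < L) (f : V → ℝ) (f' : V → V)
    (hdiff : ∀ z, HasGradientAt f (f' z) z)
    (hlip : ∀ z w : V, ‖f' z - f' w‖ ≤ L * ‖z - w‖) (z w : V) :
    f z ≤ f w + ⟪f' w, z - w⟫ + L / 2 * ‖z - w‖ ^ 2 := by
  set u := z - w with hu
  set φ : ℝ → ℝ := fun t => f (w + t • u) - t * ⟪f' w, u⟫ - L / 2 * t ^ 2 * ‖u‖ ^ 2 with hφ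
  have hder : ∀ t : ℝ, HasDerivAt φ
      (⟪f' (w + t • u), u⟫ - ⟪f' w, u⟫ - L * t * ‖u‖ ^ 2) t := by
    intro t
    have hline : HasDerivAt (fun t : ℝ => w + t • u) u t := by
      simpa using ((hasDerivAt_id t).smul_const u).const_add w
    have h1 : HasDerivAt (fun t : ℝ => f (w + t • u))
        ⟪f' (w + t • u), u⟫ t := by
      have := ((hdiff (w + t • u)).hasFDerivAt).comp_hasDerivAt t hline
      simp at this
      exact this
    have h2 : HasDerivAt (fun t : ℝ => t * ⟪f' w, u⟫) ⟪f' w, u⟫ t := by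
      simpa using (hasDerivAt_id t).mul_const (⟪f' w, u⟫)
    have h3 : HasDerivAt (fun t : ℝ => L / 2 * t ^ 2 * ‖u‖ ^ 2)
        (L * t * ‖u‖ ^ 2) t := by
      have := ((hasDerivAt_pow 2 t).const_mul (L / 2)).mul_const (‖u‖ ^ 2)
      exact this.congr_deriv (by ring)
    exact (h1.sub h2).sub h3
  have hanti : AntitoneOn φ (Set.Icc 0 1) := by
    apply antitoneOn_of_deriv_nonpos (convex_Icc 0 1)
    · exact fun t _ => (hder t).continuousAt.continuousWithinAt
    · exact fun t _ => ((hder t).differentiableAt).differentiableWithinAt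
    · intro t ht
      rw [(hder t).deriv]
      rw [interior_Icc, Set.mem_Ioo] at ht
      have h1 : ⟪f' (w + t • u), u⟫ - ⟪f' w, u⟫ ≤ L * t * ‖u‖ ^ 2 := by
        have := real_inner_le_norm (f' (w + t • u) - f' w) u
        rw [inner_sub_left] at this
        have h2 := hlip (w + t • u) w
        have h3 : ‖w + t • u - w‖ = t * ‖u‖ := by
          rw [add_sub_cancel_left, norm_smul, Real.norm_eq_abs, abs_of_pos ht.1]
        rw [h3] at h2
        nlinarith [mul_le_mul_of_nonneg_right h2 (norm_nonneg u), norm_nonneg u]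
      linarith
  have h1u : w + (1:ℝ) • u = z := by rw [one_smul, hu]; abel
  have h0u : w + (0:ℝ) • u = w := by simp
  have h := hanti (Set.left_mem_Icc.2 zero_le_one) (Set.right_mem_Icc.2 zero_le_one) zero_le_one
  simp only [hφ] at h
  rw [h1u, h0u] at h
  norm_num at h
  linarith

theorem stmt13 {V : Type*} [NormedAddCommGroup V] [InnerProductSpace ℝ V] [CompleteSpace V]
    (μ L : ℝ) (hμ : 0 ≤ μ) (hμL : μ ≤ L) (hL : 0 < L) (f : V → ℝ) (f' : V → V)
    (hdiff : ∀ z, HasGradientAt f (f' z) z)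
    (hconv : ∀ z w : V, f z - f w - ⟪f' w, z - w⟫ ≥ μ / 2 * ‖z - w‖ ^ 2)
    (hlip : ∀ z w : V, ‖f' z - f' w‖ ≤ L * ‖z - w‖)
    (g : V → ℝ) (hg : ConvexOn ℝ Set.univ g)
    (xstar : V) (hmin : ∀ z, f xstar + g xstar ≤ f z + g z)
    (γ α : ℕ → ℝ) (hγ0 : 0 < γ 0) (hα : ∀ k, 0 < α k)
    (hstep : ∀ k, L * (α k) ^ 2 = γ k * (1 + α k))
    (x y v G : ℕ → V)
    (hγrec : ∀ k, γ (k + 1) = (γ k + μ * α k) / (1 + α k))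
    (hyrec : ∀ k, (1 + α k) • y k = x k + α k • v k)
    (hG : ∀ k, ∀ z : V, g z ≥ g (y k - (1 / L) • G k) +
      ⟪G k - f' (y k), z - (y k - (1 / L) • G k)⟫)
    (hxrec : ∀ k, x (k + 1) = y k - (1 / L) • G k)
    (hvrec : ∀ k, (γ k + μ * α k) • v (k + 1) =
      γ k • v k + (μ * α k) • y k - α k • G k) :
    ∀ k : ℕ,
      (f (x (k + 1)) + g (x (k + 1))) - (f xstar + g xstar) +
          γ (k + 1) / 2 * ‖v (k + 1) - xstar‖ ^ 2 ≤
        ((f (x k) + g (x k)) - (f xstar + g xstar) +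
          γ k / 2 * ‖v k - xstar‖ ^ 2) / (1 + α k) := by
  -- positivity of γ k
  have hγpos : ∀ k, 0 < γ k := by
    intro k
    induction k with
    | zero => exact hγ0
    | succ n ih =>
      rw [hγrec n]
      have := hα n
      positivity
  intro k
  have hαk := hα k
  have h1α : (0:ℝ) < 1 + α k := by linarith
  have hγk := hγpos k
  have hs : (0:ℝ) < γ k + μ * α k := by positivity
  -- key inequality
  have key : ∀ z : V, f (x (k+1)) + g (x (k+1)) ≤ f z + g z + ⟪G k, y k - z⟫
      - 1/(2*L) * ‖G k‖ ^ 2 - μ/2 * ‖z - y k‖ ^ 2 := by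
    intro z
    have h1 := smooth_upper L hL f f' hdiff hlip (x (k+1)) (y k)
    have hxy : x (k+1) - y k = -((1/L) • G k) := by rw [hxrec k]; abel
    have e1 : ⟪f' (y k), x (k+1) - y k⟫ = -(1/L) * ⟪f' (y k), G k⟫ := by
      rw [hxy, inner_neg_right, real_inner_smul_right]; ring
    have e2 : ‖x (k+1) - y k‖ ^ 2 = (1/L)^2 * ‖G k‖ ^ 2 := by
      rw [hxy, norm_neg, norm_smul, Real.norm_eq_abs, mul_pow, sq_abs]
    rw [e1, e2] at h1
    have h3 := hconv z (y k)
    have h4 := hG k z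
    rw [← hxrec k] at h4
    have h5 : ⟪G k - f' (y k), z - x (k+1)⟫ =
        ⟪G k, z - y k⟫ + (1/L) * ‖G k‖ ^ 2 - ⟪f' (y k), z - y k⟫
          - (1/L) * ⟪f' (y k), G k⟫ := by
      have : z - x (k+1) = (z - y k) + (1/L) • G k := by rw [hxrec k]; abel
      rw [this, inner_sub_left, inner_add_right, inner_add_right,
        real_inner_smul_right, real_inner_smul_right, real_inner_self_eq_norm_sq]
      ring
    rw [h5] at h4
    have h6 : ⟪G k, y k - z⟫ = -⟪G k, z - y k⟫ := by
      rw [← inner_neg_right]; congr 1; abel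
    rw [h6]
    have hL' : 1/(2*L) = (1:ℝ)/L - 1/(2*L) := by field_simp; ring
    have e3 : L/2 * ((1/L)^2 * ‖G k‖^2) = 1/(2*L) * ‖G k‖^2 := by
      field_simp
    nlinarith [h1, h3, h4]
  -- scalar abbreviations
  set a : V := v k - xstar with ha
  set b : V := y k - xstar with hb
  set A2 : ℝ := ‖a‖^2 with hA2
  set B2 : ℝ := ‖b‖^2 with hB2
  set G2 : ℝ := ‖G k‖^2 with hG2
  set V2 : ℝ := ‖v (k+1) - xstar‖^2 with hV2
  set iaG : ℝ := ⟪G k, a⟫ with hiaG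
  set ibG : ℝ := ⟪G k, b⟫ with hibG
  set iab : ℝ := ⟪a, b⟫ with hiab
  -- instantiate key at x k and xstar
  have hyx : y k - x k = α k • (a - b) := by
    have h := hyrec k
    rw [ha, hb]
    have : y k - x k = α k • v k - α k • y k := by
      have : (1 + α k) • y k - y k - x k = x k + α k • v k - y k - x k := by rw [h]
      rw [add_smul, one_smul] at this
      rw [← sub_eq_zero] at this ⊢
      rw [← sub_eq_zero] at this
      convert this using 1
      abel
    rw [this, smul_sub, smul_sub, smul_sub]
    abel
  have hA' : f (x (k+1)) + g (x (k+1)) ≤ f (x k) + g (x k) + α k * (iaG - ibG)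
      - 1/(2*L) * G2 - μ/2 * ‖x k - y k‖^2 := by
    have := key (x k)
    have e : ⟪G k, y k - x k⟫ = α k * (iaG - ibG) := by
      rw [hyx, real_inner_smul_right, inner_sub_right, hiaG, hibG]
    linarith [this, e.ge, e.le]
  have hB' : f (x (k+1)) + g (x (k+1)) ≤ f xstar + g xstar + ibG
      - 1/(2*L) * G2 - μ/2 * B2 := by
    have := key xstar
    have e : ‖xstar - y k‖ = ‖b‖ := by rw [hb, norm_sub_rev]
    rw [e] at this
    rw [← hb, ← hB2, ← hibG] at this
    linarith
  -- norm expansion of v (k+1) - xstar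
  have hvp : (γ k + μ * α k) • (v (k+1) - xstar) =
      γ k • a + (μ * α k) • b - α k • G k := by
    rw [smul_sub, hvrec k, ha, hb]
    module
  have hexp : (γ k + μ * α k)^2 * V2 =
      γ k^2 * A2 + (μ * α k)^2 * B2 + (α k)^2 * G2
        + 2 * γ k * (μ * α k) * iab - 2 * γ k * α k * iaG
        - 2 * (μ * α k) * α k * ibG := by
    have e1 : ‖(γ k + μ * α k) • (v (k+1) - xstar)‖^2 = (γ k + μ * α k)^2 * V2 := by
      rw [norm_smul, Real.norm_eq_abs, mul_pow, sq_abs, hV2]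
    rw [← e1, hvp, ← real_inner_self_eq_norm_sq]
    simp only [inner_sub_left, inner_sub_right, inner_add_left, inner_add_right,
      real_inner_smul_left, real_inner_smul_right]
    rw [real_inner_self_eq_norm_sq, real_inner_self_eq_norm_sq,
      real_inner_self_eq_norm_sq, ← hA2, ← hB2, ← hG2]
    rw [hiaG, hibG, hiab, real_inner_comm b a, real_inner_comm a (G k),
      real_inner_comm b (G k)]
    ring
  have hcexp : ‖γ k • (a - b) - α k • G k‖^2 =
      γ k^2 * A2 + γ k^2 * B2 - 2 * γ k^2 * iab
        - 2 * γ k * α k * iaG + 2 * γ k * α k * ibG + (α k)^2 * G2 := by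
    rw [← real_inner_self_eq_norm_sq]
    simp only [inner_sub_left, inner_sub_right, smul_sub,
      real_inner_smul_left, real_inner_smul_right]
    rw [real_inner_self_eq_norm_sq, real_inner_self_eq_norm_sq,
      real_inner_self_eq_norm_sq, ← hA2, ← hB2, ← hG2]
    rw [hiaG, hibG, hiab, real_inner_comm b a, real_inner_comm a (G k),
      real_inner_comm b (G k)]
    ring
  have hcpos : (0:ℝ) ≤ ‖γ k • (a - b) - α k • G k‖^2 := sq_nonneg _
  rw [hcexp] at hcpos
  -- the main algebraic inequality
  have hE : (γ k + μ * α k) * (γ k^2 * A2 - 2 * γ k * α k * iaG + (α k)^2 * G2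
        + γ k * α k * μ * B2 - γ k * (γ k + μ * α k) * V2)
      = μ * α k * (γ k^2 * A2 + γ k^2 * B2 - 2 * γ k^2 * iab
          - 2 * γ k * α k * iaG + 2 * γ k * α k * ibG + (α k)^2 * G2) := by
    linear_combination (-(γ k)) * hexp
  have h9 : 0 ≤ μ * α k * (γ k^2 * A2 + γ k^2 * B2 - 2 * γ k^2 * iab
      - 2 * γ k * α k * iaG + 2 * γ k * α k * ibG + (α k)^2 * G2) :=
    mul_nonneg (mul_nonneg hμ hαk.le) hcpos
  have hfin2 : γ k * (γ k + μ * α k) * V2 ≤ γ k^2 * A2 - 2 * γ k * α k * iaG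
      + (α k)^2 * G2 + γ k * α k * μ * B2 := by
    have hQ : 0 ≤ (γ k + μ * α k) * (γ k^2 * A2 - 2 * γ k * α k * iaG
        + (α k)^2 * G2 + γ k * α k * μ * B2 - γ k * (γ k + μ * α k) * V2) := by
      rw [hE]; exact h9
    have hQ' := le_of_mul_le_mul_left (by linarith : (γ k + μ * α k) * 0 ≤
      (γ k + μ * α k) * (γ k^2 * A2 - 2 * γ k * α k * iaG
        + (α k)^2 * G2 + γ k * α k * μ * B2 - γ k * (γ k + μ * α k) * V2)) hs
    linarith
  have hL0 : L ≠ 0 := hL.ne'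
  have hγk0 : γ k ≠ 0 := hγk.ne'
  set D : ℝ := 1/(2*L) with hD
  have hq : 2 * γ k * ((1 + α k) * D * G2) = (α k)^2 * G2 := by
    rw [hD]
    field_simp
    linear_combination (-G2) * hstep k
  have hfin : (γ k + μ * α k)/2 * V2 ≤ γ k/2 * A2 - α k * iaG
      + (1 + α k) * D * G2 + α k * μ/2 * B2 := by
    have hP : (0:ℝ) < 2 * γ k := by positivity
    rw [← mul_le_mul_iff_right₀ hP]
    ring_nf
    ring_nf at hfin2 hq
    linarith [hfin2, hq]
  -- conclude
  have hγ' : γ (k+1) * (1 + α k) = γ k + μ * α k := by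
    rw [hγrec k]; field_simp
  have hγ'V : γ (k+1) * (1 + α k) * V2 = (γ k + μ * α k) * V2 := by rw [hγ']
  have hB'' := mul_le_mul_of_nonneg_left hB' hαk.le
  have hXY : 0 ≤ μ * ‖x k - y k‖^2 := mul_nonneg hμ (sq_nonneg _)
  rw [le_div_iff₀ h1α]
  have hcomb : (1 + α k) * (f (x (k+1)) + g (x (k+1))) + (γ k + μ * α k)/2 * V2 ≤
      f (x k) + g (x k) + α k * (f xstar + g xstar) + γ k/2 * A2 := by
    linarith [hA', hB'', hfin, hXY]
  linarith [hcomb, hγ'V]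
end

section
/- Let V be a real Hilbert space, 0 ≤ μ ≤ L with L > 0, let f ∈ S^{1,1}_{μ,L}, let g : V → ℝ be convex, F = f + g, and let x* be a global minimizer of F. Let γ_0 > 0 and consider OAG Method-II: for each k ≥ 0, α_k ∈ (0,1) satisfies L·α_k² = (1 − α_k)γ_k + μα_k; γ_{k+1} = (1 − α_k)γ_k + μα_k; y_k = (α_k γ_k v_k + γ_{k+1} x_k)/(γ_k + μα_k); G_k ∈ V satisfies g(z) ≥ g(y_k − G_k/L) + ⟨G_k − ∇f(y_k), z − (y_k − G_k/L)⟩ for all z ∈ V; x_{k+1} = y_k − (1/L)G_k; and v_{k+1} = ((1 − α_k)γ_k v_k + α_k(μ y_k − G_k))/γ_{k+1}. Then for every k ≥ 0, 𝓛_{k+1} ≤ (1 − α_k)·𝓛_k, where 𝓛_k = F(x_k) − F(x*) + (γ_k/2)‖v_k − x*‖². -/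
set_option maxHeartbeats 1000000
open RealInnerProductSpace

theorem aux_descent {V : Type*} [NormedAddCommGroup V] [InnerProductSpace ℝ V] [CompleteSpace V]
    (L : ℝ) (f : V → ℝ) (f' : V → V)
    (hdiff : ∀ z, HasGradientAt f (f' z) z)
    (hlip : ∀ z w : V, ‖f' z - f' w‖ ≤ L * ‖z - w‖) :
    ∀ z w : V, f z ≤ f w + ⟪f' w, z - w⟫ + L / 2 * ‖z - w‖ ^ 2 := by
  intro z w
  set d := z - w with hd
  have hline : ∀ t : ℝ, HasDerivAt (fun t : ℝ => w + t • d) d t := by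
    intro t
    simpa using ((hasDerivAt_id t).smul_const d).const_add w
  have hcomp : ∀ t : ℝ, HasDerivAt (fun t : ℝ => f (w + t • d)) ⟪f' (w + t • d), d⟫ t := by
    intro t
    have h1 := (hdiff (w + t • d)).hasFDerivAt.comp_hasDerivAt t (hline t)
    exact h1
  set ψ : ℝ → ℝ := fun t => f (w + t • d) - t * ⟪f' w, d⟫ - L / 2 * t ^ 2 * ‖d‖ ^ 2 with hψ
  have hψd : ∀ t : ℝ, HasDerivAt ψ (⟪f' (w + t • d), d⟫ - ⟪f' w, d⟫ - L * t * ‖d‖ ^ 2) t := by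
    intro t
    have h1 : HasDerivAt (fun t : ℝ => t * ⟪f' w, d⟫) ⟪f' w, d⟫ t := by
      simpa using (hasDerivAt_id t).mul_const (⟪f' w, d⟫)
    have h2 : HasDerivAt (fun t : ℝ => L / 2 * t ^ 2 * ‖d‖ ^ 2) (L * t * ‖d‖ ^ 2) t := by
      have := ((hasDerivAt_pow 2 t).const_mul (L / 2)).mul_const (‖d‖ ^ 2)
      refine this.congr_deriv ?_
      ring
    exact ((hcomp t).sub h1).sub h2
  have hmvt := exists_hasDerivAt_eq_slope ψ
      (fun t => ⟪f' (w + t • d), d⟫ - ⟪f' w, d⟫ - L * t * ‖d‖ ^ 2) (by norm_num : (0:ℝ) < 1)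
      (fun t _ => (hψd t).continuousAt.continuousWithinAt)
      (fun t _ => hψd t)
  obtain ⟨c, hc, hceq⟩ := hmvt
  have hder_le : ⟪f' (w + c • d), d⟫ - ⟪f' w, d⟫ - L * c * ‖d‖ ^ 2 ≤ 0 := by
    have h1 : ⟪f' (w + c • d) - f' w, d⟫ ≤ ‖f' (w + c • d) - f' w‖ * ‖d‖ :=
      real_inner_le_norm _ _
    have h2 : ‖f' (w + c • d) - f' w‖ ≤ L * (c * ‖d‖) := by
      have := hlip (w + c • d) w
      simpa [norm_smul, abs_of_pos hc.1, mul_assoc] using this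
    have h3 : ⟪f' (w + c • d) - f' w, d⟫ = ⟪f' (w + c • d), d⟫ - ⟪f' w, d⟫ := by
      rw [inner_sub_left]
    nlinarith [norm_nonneg d, norm_nonneg (f' (w + c • d) - f' w)]
  have hslope : (ψ 1 - ψ 0) / (1 - 0) ≤ 0 := hceq ▸ hder_le
  have hψ1 : ψ 1 = f z - ⟪f' w, d⟫ - L / 2 * ‖d‖ ^ 2 := by
    simp [hψ, hd]
  have hψ0 : ψ 0 = f w := by simp [hψ]
  rw [hψ1, hψ0] at hslope
  linarith

theorem stmt15 {V : Type*} [NormedAddCommGroup V] [InnerProductSpace ℝ V] [CompleteSpace V]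
    (μ L : ℝ) (hμ : 0 ≤ μ) (hμL : μ ≤ L) (hL : 0 < L) (f : V → ℝ) (f' : V → V)
    (hdiff : ∀ z, HasGradientAt f (f' z) z)
    (hconv : ∀ z w : V, f z - f w - ⟪f' w, z - w⟫ ≥ μ / 2 * ‖z - w‖ ^ 2)
    (hlip : ∀ z w : V, ‖f' z - f' w‖ ≤ L * ‖z - w‖)
    (g : V → ℝ) (hg : ConvexOn ℝ Set.univ g)
    (xstar : V) (hmin : ∀ z, f xstar + g xstar ≤ f z + g z)
    (γ α : ℕ → ℝ) (hγ0 : 0 < γ 0) (hα : ∀ k, 0 < α k ∧ α k < 1)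
    (hstep : ∀ k, L * (α k) ^ 2 = (1 - α k) * γ k + μ * α k)
    (x y v G : ℕ → V)
    (hγrec : ∀ k, γ (k + 1) = (1 - α k) * γ k + μ * α k)
    (hyrec : ∀ k, (γ k + μ * α k) • y k = (α k * γ k) • v k + γ (k + 1) • x k)
    (hG : ∀ k, ∀ z : V, g z ≥ g (y k - (1 / L) • G k) +
      ⟪G k - f' (y k), z - (y k - (1 / L) • G k)⟫)
    (hxrec : ∀ k, x (k + 1) = y k - (1 / L) • G k)
    (hvrec : ∀ k, γ (k + 1) • v (k + 1) =
      ((1 - α k) * γ k) • v k + α k • (μ • y k - G k)) :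
    ∀ k : ℕ,
      (f (x (k + 1)) + g (x (k + 1))) - (f xstar + g xstar) +
          γ (k + 1) / 2 * ‖v (k + 1) - xstar‖ ^ 2 ≤
        (1 - α k) * ((f (x k) + g (x k)) - (f xstar + g xstar) +
          γ k / 2 * ‖v k - xstar‖ ^ 2) := by
  have hdesc := aux_descent L f f' hdiff hlip
  have hγpos : ∀ n, 0 < γ n := by
    intro n
    induction n with
    | zero => exact hγ0
    | succ n ih =>
      obtain ⟨h0, h1⟩ := hα n
      rw [hγrec n]
      have h2 : 0 < (1 - α n) * γ n := mul_pos (by linarith) ih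
      nlinarith [mul_nonneg hμ h0.le]
  intro k
  obtain ⟨ha0, ha1⟩ := hα k
  have hγk := hγpos k
  have hγ1 := hγpos (k + 1)
  -- key per-z inequality
  have hkey : ∀ z : V, f (x (k + 1)) + g (x (k + 1)) ≤ f z + g z + ⟪G k, y k - z⟫
      - 1 / (2 * L) * ‖G k‖ ^ 2 - μ / 2 * ‖z - y k‖ ^ 2 := by
    intro z
    have d1 := hdesc (x (k + 1)) (y k)
    have d2 := hconv z (y k)
    have d3 := hG k z
    rw [hxrec k] at d1 ⊢
    have e0 : (y k - (1 / L) • G k) - y k = -((1 / L) • G k) := by abel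
    have e1 : ⟪f' (y k), (y k - (1 / L) • G k) - y k⟫ = -(1 / L * ⟪f' (y k), G k⟫) := by
      rw [e0, inner_neg_right, real_inner_smul_right]
    have e2 : ‖(y k - (1 / L) • G k) - y k‖ ^ 2 = (1 / L) ^ 2 * ‖G k‖ ^ 2 := by
      rw [e0, norm_neg, norm_smul, mul_pow, Real.norm_eq_abs, sq_abs]
    rw [e1, e2] at d1
    have e3 : ⟪G k - f' (y k), z - (y k - (1 / L) • G k)⟫
        = ⟪G k, z - y k⟫ + 1 / L * ⟪G k, G k⟫ - ⟪f' (y k), z - y k⟫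
          - 1 / L * ⟪f' (y k), G k⟫ := by
      simp only [inner_sub_left, inner_sub_right, real_inner_smul_right]
      ring
    rw [e3] at d3
    have e4 : ⟪G k, y k - z⟫ = -⟪G k, z - y k⟫ := by
      simp only [inner_sub_right]; ring
    have e5 : ⟪G k, G k⟫ = ‖G k‖ ^ 2 := real_inner_self_eq_norm_sq _
    rw [e4]
    rw [e5] at d3
    have hL2 : L / 2 * ((1 / L) ^ 2 * ‖G k‖ ^ 2) = 1 / (2 * L) * ‖G k‖ ^ 2 := by
      field_simp
    have hL3 : 1 / L * ‖G k‖ ^ 2 - 1 / (2 * L) * ‖G k‖ ^ 2 = 1 / (2 * L) * ‖G k‖ ^ 2 := by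
      field_simp
      ring
    linarith
  have K1 := hkey (x k)
  have K2 := hkey xstar
  set a := α k with hadef
  set A := v k - xstar with hA
  set B := y k - xstar with hB
  set c1 := (1 - a) * γ k with hc1
  set c2 := μ * a with hc2
  -- vector identity for v_{k+1}
  have hw : γ (k + 1) • (v (k + 1) - xstar) = c1 • A + c2 • B - a • G k := by
    rw [smul_sub, hvrec k, hγrec k, hA, hB, hc1, hc2]
    module
  have hwn : γ (k + 1) ^ 2 * ‖v (k + 1) - xstar‖ ^ 2 = ‖c1 • A + c2 • B - a • G k‖ ^ 2 := by
    rw [← hw, norm_smul, mul_pow, Real.norm_eq_abs, sq_abs]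
  have hexp : ‖c1 • A + c2 • B - a • G k‖ ^ 2
      = c1 ^ 2 * ‖A‖ ^ 2 + c2 ^ 2 * ‖B‖ ^ 2 + a ^ 2 * ‖G k‖ ^ 2
        + 2 * c1 * c2 * ⟪A, B⟫ - 2 * a * c1 * ⟪G k, A⟫ - 2 * a * c2 * ⟪G k, B⟫ := by
    rw [← real_inner_self_eq_norm_sq, ← real_inner_self_eq_norm_sq (A),
      ← real_inner_self_eq_norm_sq (B), ← real_inner_self_eq_norm_sq (G k)]
    simp only [inner_sub_left, inner_sub_right, inner_add_left, inner_add_right,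
      real_inner_smul_left, real_inner_smul_right,
      show ⟪B, A⟫ = ⟪A, B⟫ from real_inner_comm A B,
      show ⟪A, G k⟫ = ⟪G k, A⟫ from real_inner_comm (G k) A,
      show ⟪B, G k⟫ = ⟪G k, B⟫ from real_inner_comm (G k) B]
    ring
  have hAB : (0:ℝ) ≤ ‖A‖ ^ 2 - 2 * ⟪A, B⟫ + ‖B‖ ^ 2 := by
    have := sq_nonneg ‖A - B‖
    rw [norm_sub_sq_real] at this
    linarith
  have hyG : (γ k + μ * a) * ⟪G k, y k⟫ = (a * γ k) * ⟪G k, v k⟫ + γ (k + 1) * ⟪G k, x k⟫ := by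
    have := congrArg (fun u : V => ⟪G k, u⟫) (hyrec k)
    simpa [inner_add_right, real_inner_smul_right] using this
  have hT : a * (c1 * ⟪G k, A⟫ + c2 * ⟪G k, B⟫)
      = γ (k + 1) * ((1 - a) * ⟪G k, y k - x k⟫ + a * ⟪G k, B⟫) := by
    simp only [hA, hB, inner_sub_right]
    rw [hγrec k]
    rw [hγrec k] at hyG
    linear_combination (-(1 - a)) * hyG
  have hLa : L * a ^ 2 = γ (k + 1) := by rw [hγrec k]; exact hstep k
  have ha2 : a ^ 2 * ‖G k‖ ^ 2 = γ (k + 1) / L * ‖G k‖ ^ 2 := by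
    rw [← hLa]
    field_simp
  have hγ1eq : γ (k + 1) = c1 + c2 := by
    rw [hγrec k, hc1, hc2]
    try ring
  have hc1n : (0:ℝ) ≤ c1 := mul_nonneg (by linarith) hγk.le
  have hc2n : (0:ℝ) ≤ c2 := mul_nonneg hμ ha0.le
  have h1 : γ (k + 1) ^ 2 * ‖v (k + 1) - xstar‖ ^ 2
      ≤ γ (k + 1) * (c1 * ‖A‖ ^ 2 + c2 * ‖B‖ ^ 2)
        - 2 * γ (k + 1) * ((1 - a) * ⟪G k, y k - x k⟫ + a * ⟪G k, B⟫)
        + γ (k + 1) / L * ‖G k‖ ^ 2 := by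
    rw [hwn, hexp, hγ1eq]
    rw [hγ1eq] at hT ha2
    nlinarith [mul_nonneg (mul_nonneg hc1n hc2n) hAB, hT, ha2]
  have hS2 : γ (k + 1) * ‖v (k + 1) - xstar‖ ^ 2
      ≤ c1 * ‖A‖ ^ 2 + c2 * ‖B‖ ^ 2 - 2 * (1 - a) * ⟪G k, y k - x k⟫
        - 2 * a * ⟪G k, B⟫ + 1 / L * ‖G k‖ ^ 2 := by
    have h2 : γ (k + 1) * (γ (k + 1) * ‖v (k + 1) - xstar‖ ^ 2)
        ≤ γ (k + 1) * (c1 * ‖A‖ ^ 2 + c2 * ‖B‖ ^ 2 - 2 * (1 - a) * ⟪G k, y k - x k⟫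
          - 2 * a * ⟪G k, B⟫ + 1 / L * ‖G k‖ ^ 2) := by
      have hdiv : γ (k + 1) / L * ‖G k‖ ^ 2 = γ (k + 1) * (1 / L * ‖G k‖ ^ 2) := by
        ring
      nlinarith [h1]
    exact (mul_le_mul_iff_right₀ hγ1).mp h2
  -- final combination
  have hnn : (0:ℝ) ≤ (1 - a) * (μ / 2 * ‖x k - y k‖ ^ 2) := by
    have := sq_nonneg ‖x k - y k‖
    have h5 : (0:ℝ) ≤ μ / 2 * ‖x k - y k‖ ^ 2 := by positivity
    exact mul_nonneg (by linarith) h5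
  have hrev : ‖xstar - y k‖ = ‖y k - xstar‖ := norm_sub_rev _ _
  rw [hrev] at K2
  have hK1' := mul_le_mul_of_nonneg_left K1 (by linarith : (0:ℝ) ≤ 1 - a)
  have hK2' := mul_le_mul_of_nonneg_left K2 ha0.le
  have hGyx : ⟪G k, y k - xstar⟫ = ⟪G k, B⟫ := by rw [hB]
  rw [hGyx] at hK2'
  have hBn : ‖y k - xstar‖ = ‖B‖ := by rw [hB]
  rw [hBn] at hK2'
  rw [hc1, hc2] at hS2
  have hL0 : L ≠ 0 := hL.ne'
  have hq : 1 / L * ‖G k‖ ^ 2 = 2 * (1 / (2 * L) * ‖G k‖ ^ 2) := by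
    field_simp
  rw [hq] at hS2
  linarith [hK1', hK2', hS2, hnn]
end

section
/- Let a, b, c, d ≥ 0 be real numbers and let R be the 2×2 real matrix [[−a, c], [−b, −d]], and assume tr(R) < 0 < det(R) (note tr(R) = −(a + d) and det(R) = ad + bc). Set M = [[−a, 0], [−b, −d]], N = [[0, c], [0, 0]], and for α > 0 let E(α, R) = (I − αM)⁻¹(I + αN). If α > 0 satisfies |tr(R)| − 2√(det R) ≤ bc·α ≤ |tr(R)| + 2√(det R), then the spectral radius satisfies ρ(E(α, R)) = 1/√(1 + |tr(R)|·α + a·d·α²). -/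
set_option maxHeartbeats 1000000


open Matrix

/-- Spectral radius of a real square matrix: maximum modulus of its complex eigenvalues. -/
noncomputable def specRad {n : Type*} [Fintype n] [DecidableEq n] (M : Matrix n n ℝ) : ℝ :=
  sSup {r : ℝ | ∃ z ∈ spectrum ℂ (M.map Complex.ofReal), r = ‖z‖}

lemma quad_abs (D S : ℝ) (hD : 0 < D) (hdisc : S^2 ≤ 4*D) (z : ℂ)
    (hz : (D:ℂ) * z^2 - S * z + 1 = 0) : ‖z‖ = 1 / Real.sqrt D := by
  have h1 := congrArg Complex.re hz
  have h2 := congrArg Complex.im hz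
  simp [pow_two, Complex.mul_re, Complex.mul_im] at h1 h2
  set p := z.re; set q := z.im
  have key : p^2 + q^2 = 1/D := by
    rcases eq_or_ne q 0 with hq | hq
    · rw [hq]
      rw [hq] at h1
      have : D * p^2 = 1 := by nlinarith [sq_nonneg (2*D*p - S)]
      field_simp
      nlinarith
    · have h3 : q*(2*D*p - S) = 0 := by linear_combination h2
      have hp : 2*D*p - S = 0 := (mul_eq_zero.mp h3).resolve_left hq
      have : D*(p^2+q^2) = 1 := by linear_combination (-1)*h1 + p*hp
      field_simp
      linarith
  rw [Complex.norm_def, Complex.normSq_apply, ← pow_two, ← pow_two, key,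
    one_div, one_div, Real.sqrt_inv]

theorem stmt17 (a b c d α : ℝ) (ha : 0 ≤ a) (hb : 0 ≤ b) (hc : 0 ≤ c) (hd : 0 ≤ d)
    (R M N : Matrix (Fin 2) (Fin 2) ℝ)
    (hR : R = !![-a, c; -b, -d]) (hM : M = !![-a, 0; -b, -d]) (hN : N = !![0, c; 0, 0])
    (htr : R.trace < 0) (hdet : 0 < R.det)
    (hα : 0 < α)
    (h1 : |R.trace| - 2 * Real.sqrt R.det ≤ b * c * α)
    (h2 : b * c * α ≤ |R.trace| + 2 * Real.sqrt R.det) :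
    specRad ((1 - α • M)⁻¹ * (1 + α • N)) =
      1 / Real.sqrt (1 + |R.trace| * α + a * d * α ^ 2) := by
  have hT : R.trace = -(a+d) := by rw [hR]; simp [Matrix.trace_fin_two]; ring
  have habs : |R.trace| = a + d := by rw [abs_of_neg htr, hT]; ring
  have hDet : R.det = a*d + b*c := by rw [hR, Matrix.det_fin_two]; simp; ring
  have hdet' : 0 < a*d + b*c := by rwa [hDet] at hdet
  have hA1 : (0:ℝ) < 1 + a*α := by positivity
  have hA2 : (0:ℝ) < 1 + d*α := by positivity
  obtain ⟨DD, hDDdef⟩ : ∃ DD : ℝ, DD = (1 + a*α) * (1 + d*α) := ⟨_, rfl⟩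
  have hDD : 0 < DD := hDDdef ▸ mul_pos hA1 hA2
  obtain ⟨S, hSdef⟩ : ∃ S : ℝ, S = 2 + (a+d)*α - b*c*α^2 := ⟨_, rfl⟩
  -- discriminant condition
  have hsq : (b*c*α - (a+d))^2 ≤ 4*(a*d+b*c) := by
    have h1' : -(2*Real.sqrt (a*d+b*c)) ≤ b*c*α - (a+d) := by
      rw [habs, hDet] at h1; linarith
    have h2' : b*c*α - (a+d) ≤ 2*Real.sqrt (a*d+b*c) := by
      rw [habs, hDet] at h2; linarith
    have := sq_le_sq' h1' h2'
    have hss : Real.sqrt (a*d+b*c) ^ 2 = a*d+b*c := Real.sq_sqrt hdet'.le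
    nlinarith
  have hdisc : S^2 ≤ 4*DD := by
    have := mul_le_mul_of_nonneg_left hsq (sq_nonneg α)
    rw [hSdef, hDDdef]; nlinarith
  -- compute the matrix E
  have hIM : (1 : Matrix (Fin 2) (Fin 2) ℝ) - α • M = !![1+a*α, 0; b*α, 1+d*α] := by
    subst hM; ext i j; fin_cases i <;> fin_cases j <;> simp [Matrix.one_apply] <;> ring
  have hIN : (1 : Matrix (Fin 2) (Fin 2) ℝ) + α • N = !![1, c*α; 0, 1] := by
    subst hN; ext i j; fin_cases i <;> fin_cases j <;> simp [Matrix.one_apply] <;> ring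
  have hinv : (!![1+a*α, 0; b*α, 1+d*α] : Matrix (Fin 2) (Fin 2) ℝ)⁻¹ =
      !![1/(1+a*α), 0; -(b*α)/DD, 1/(1+d*α)] := by
    apply Matrix.inv_eq_right_inv
    rw [Matrix.mul_fin_two]
    rw [show (1 : Matrix (Fin 2) (Fin 2) ℝ) = !![1,0;0,1] from Matrix.one_fin_two]
    rw [hDDdef]
    ext i j; fin_cases i <;> fin_cases j <;> simp <;> field_simp <;> ring
  have hE : (1 - α • M)⁻¹ * (1 + α • N) =
      !![1/(1+a*α), c*α/(1+a*α); -(b*α)/DD, (1+a*α - b*c*α^2)/DD] := by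
    rw [hIM, hIN, hinv, Matrix.mul_fin_two]
    ext i j
    fin_cases i <;> fin_cases j <;>
      simp only [Matrix.cons_val', Matrix.cons_val_zero, Matrix.cons_val_one, Matrix.head_cons,
        Matrix.empty_val', Matrix.cons_val_fin_one, Matrix.head_fin_const] <;>
      rw [hDDdef] <;> field_simp <;> ring
  -- spectrum characterization
  have hmem : ∀ z : ℂ, z ∈ spectrum ℂ
      ((!![1/(1+a*α), c*α/(1+a*α); -(b*α)/DD, (1+a*α - b*c*α^2)/DD] :
        Matrix (Fin 2) (Fin 2) ℝ).map Complex.ofReal) ↔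
      ((DD:ℝ):ℂ)*z^2 - (S:ℂ)*z + 1 = 0 := by
    intro z
    have hmap : (!![1/(1+a*α), c*α/(1+a*α); -(b*α)/DD, (1+a*α - b*c*α^2)/DD] :
        Matrix (Fin 2) (Fin 2) ℝ).map Complex.ofReal =
        !![((1/(1+a*α) : ℝ):ℂ), ((c*α/(1+a*α) : ℝ):ℂ);
           ((-(b*α)/DD : ℝ):ℂ), (((1+a*α - b*c*α^2)/DD : ℝ):ℂ)] := by
      ext i j; fin_cases i <;> fin_cases j <;> simp
    have hA1' : ((1+a*α : ℝ):ℂ) ≠ 0 := by exact_mod_cast hA1.ne'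
    have hA2' : ((1+d*α : ℝ):ℂ) ≠ 0 := by exact_mod_cast hA2.ne'
    have hDD' : ((DD : ℝ):ℂ) ≠ 0 := by exact_mod_cast hDD.ne'
    have hdeteq : det (algebraMap ℂ (Matrix (Fin 2) (Fin 2) ℂ) z -
        !![((1/(1+a*α) : ℝ):ℂ), ((c*α/(1+a*α) : ℝ):ℂ);
           ((-(b*α)/DD : ℝ):ℂ), (((1+a*α - b*c*α^2)/DD : ℝ):ℂ)]) =
        (((DD:ℝ):ℂ)*z^2 - (S:ℂ)*z + 1) / ((DD:ℝ):ℂ) := by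
      rw [Matrix.det_fin_two]
      simp only [Matrix.sub_apply, Matrix.algebraMap_matrix_apply, Matrix.of_apply, Algebra.algebraMap_self, RingHom.id_apply, Matrix.cons_val',
        Matrix.cons_val_zero, Matrix.cons_val_one, Matrix.head_cons, Matrix.head_fin_const,
        Matrix.empty_val', Matrix.cons_val_fin_one, if_true, if_false,
        Fin.zero_eq_one_iff, Fin.one_eq_zero_iff]
      rw [hDDdef, hSdef]
      have e1 : ((1:ℂ) + (a:ℂ)*(α:ℂ)) ≠ 0 := by exact_mod_cast hA1.ne'
      have e2 : ((1:ℂ) + (d:ℂ)*(α:ℂ)) ≠ 0 := by exact_mod_cast hA2.ne'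
      push_cast
      have e3 : ((1:ℂ) + (α:ℂ)*(d:ℂ)) ≠ 0 := by rw [mul_comm]; exact e2
      field_simp [e1, e2, e3]
      ring
    rw [spectrum.mem_iff, hmap, Matrix.isUnit_iff_isUnit_det, isUnit_iff_ne_zero, not_not,
      hdeteq, div_eq_zero_iff]
    exact or_iff_left hDD'
  -- the root
  obtain ⟨u, hudef⟩ : ∃ u : ℝ, u = Real.sqrt (4*DD - S^2) := ⟨_, rfl⟩
  have hu : u^2 = 4*DD - S^2 := by rw [hudef]; exact Real.sq_sqrt (by linarith)
  obtain ⟨z₀, hz₀def⟩ : ∃ z₀ : ℂ, z₀ = ((S:ℂ) + Complex.I * u) / (2*DD) := ⟨_, rfl⟩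
  have hIu : (Complex.I * (u:ℂ))^2 = (S:ℂ)^2 - 4*(DD:ℂ) := by
    rw [mul_pow, Complex.I_sq]
    rw [show ((u:ℂ))^2 = ((u^2:ℝ):ℂ) by push_cast; ring, hu]
    push_cast; ring
  have hz₀ : ((DD:ℝ):ℂ)*z₀^2 - (S:ℂ)*z₀ + 1 = 0 := by
    have hDD' : ((DD : ℝ):ℂ) ≠ 0 := by exact_mod_cast hDD.ne'
    rw [hz₀def]
    have h4 : (4:ℂ)*DD ≠ 0 := by simpa using hDD'
    field_simp
    linear_combination hIu
  -- conclusion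
  rw [hE]
  have hset : {r : ℝ | ∃ z ∈ spectrum ℂ
      ((!![1/(1+a*α), c*α/(1+a*α); -(b*α)/DD, (1+a*α - b*c*α^2)/DD] :
        Matrix (Fin 2) (Fin 2) ℝ).map Complex.ofReal), r = ‖z‖} =
      {1 / Real.sqrt DD} := by
    ext r
    simp only [Set.mem_setOf_eq, Set.mem_singleton_iff]
    constructor
    · rintro ⟨z, hz, rfl⟩
      exact quad_abs DD S hDD hdisc z ((hmem z).mp hz)
    · rintro rfl
      exact ⟨z₀, (hmem z₀).mpr hz₀, (quad_abs DD S hDD hdisc z₀ hz₀).symm⟩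
  rw [specRad, hset, csSup_singleton]
  rw [habs]
  congr 2
  rw [hDDdef]; ring
end

section
/- Let 0 ≤ μ < L and γ_0 > 0. Define sequences (α_k)_{k≥0} and (γ_k)_{k≥0} by: α_k is a solution of L·α_k² = (1 − α_k)γ_k + μα_k with γ_{k+1} = (1 − α_k)γ_k + μα_k. Then for all k ≥ 0: γ_k > 0, 0 < α_k < 1, and α_k ≥ √(min{γ_1, μ}/L). Moreover, for all k ≥ 0, ∏_{i=0}^{k−1}(1 − α_i) ≤ min{ 4L/(√γ_0·k + 2√L)², (1 − √(min{γ_1, μ}/L))^{k} }. -/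
set_option maxHeartbeats 1000000


theorem stmt18 (μ L : ℝ) (hμ : 0 ≤ μ) (hμL : μ < L)
    (γ α : ℕ → ℝ) (hγ0 : 0 < γ 0)
    (hαpos : ∀ k, 0 < α k)
    (hquad : ∀ k, L * (α k) ^ 2 = (1 - α k) * γ k + μ * α k)
    (hγrec : ∀ k, γ (k + 1) = (1 - α k) * γ k + μ * α k) :
    (∀ k : ℕ, 0 < γ k ∧ 0 < α k ∧ α k < 1 ∧ Real.sqrt (min (γ 1) μ / L) ≤ α k) ∧
    (∀ k : ℕ, (∏ i ∈ Finset.range k, (1 - α i)) ≤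
      min (4 * L / (Real.sqrt (γ 0) * k + 2 * Real.sqrt L) ^ 2)
        ((1 - Real.sqrt (min (γ 1) μ / L)) ^ k)) := by
  have hL : 0 < L := lt_of_le_of_lt hμ hμL
  have hγpos : ∀ k, 0 < γ k := by
    intro k
    induction k with
    | zero => exact hγ0
    | succ n _ =>
      rw [hγrec n, ← hquad n]
      exact mul_pos hL (pow_pos (hαpos n) 2)
  have hα1 : ∀ k, α k < 1 := by
    intro k
    by_contra h
    push_neg at h
    nlinarith [hquad k, hγpos k, hαpos k,
      mul_nonneg (sub_nonneg.mpr h) (hγpos k).le,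
      mul_nonneg (mul_nonneg hL.le (sub_nonneg.mpr h)) (hαpos k).le,
      mul_pos (sub_pos.mpr hμL) (hαpos k)]
  set m := min (γ 1) μ with hm
  have hm0 : 0 ≤ m := le_min (hγpos 1).le hμ
  have hmμ : m ≤ μ := min_le_right _ _
  have hγm : ∀ k, m ≤ γ (k + 1) := by
    intro k
    induction k with
    | zero => exact min_le_left _ _
    | succ n ih =>
      rw [hγrec (n+1)]
      nlinarith [hα1 (n+1), hαpos (n+1),
        mul_nonneg (by linarith [hα1 (n+1)] : (0:ℝ) ≤ 1 - α (n+1))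
          (by linarith : (0:ℝ) ≤ γ (n+1) - m),
        mul_nonneg (hαpos (n+1)).le (by linarith : (0:ℝ) ≤ μ - m)]
  have hαsq : ∀ k, m ≤ L * α k ^ 2 := by
    intro k
    rw [hquad k, ← hγrec k]
    exact hγm k
  have hsqα : ∀ k, Real.sqrt (m / L) ≤ α k := by
    intro k
    have h1 : m / L ≤ α k ^ 2 := by
      rw [div_le_iff₀ hL]
      nlinarith [hαsq k]
    calc Real.sqrt (m / L) ≤ Real.sqrt (α k ^ 2) := Real.sqrt_le_sqrt h1
      _ = α k := Real.sqrt_sq (hαpos k).le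
  have hfacpos : ∀ i, 0 < 1 - α i := fun i => by linarith [hα1 i]
  have hPpos : ∀ k, 0 < ∏ i ∈ Finset.range k, (1 - α i) :=
    fun k => Finset.prod_pos (fun i _ => hfacpos i)
  have hbound2 : ∀ k, (∏ i ∈ Finset.range k, (1 - α i)) ≤ (1 - Real.sqrt (m / L)) ^ k := by
    intro k
    calc (∏ i ∈ Finset.range k, (1 - α i))
        ≤ ∏ _i ∈ Finset.range k, (1 - Real.sqrt (m / L)) :=
          Finset.prod_le_prod (fun i _ => (hfacpos i).le) (fun i _ => by linarith [hsqα i])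
      _ = (1 - Real.sqrt (m / L)) ^ k := by rw [Finset.prod_const, Finset.card_range]
  have hγP : ∀ k, (∏ i ∈ Finset.range k, (1 - α i)) * γ 0 ≤ γ k := by
    intro k
    induction k with
    | zero => simp
    | succ n ih =>
      rw [Finset.prod_range_succ, hγrec n]
      nlinarith [hfacpos n, hαpos n, hPpos n,
        mul_nonneg (hfacpos n).le
          (by linarith : (0:ℝ) ≤ γ n - (∏ i ∈ Finset.range n, (1 - α i)) * γ 0),
        mul_nonneg hμ (hαpos n).le]
  set c := Real.sqrt (γ 0) / (2 * Real.sqrt L) with hc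
  set s : ℕ → ℝ := fun k => Real.sqrt (∏ i ∈ Finset.range k, (1 - α i)) with hs
  have hsLpos : 0 < Real.sqrt L := Real.sqrt_pos.mpr hL
  have hsγ0 : Real.sqrt (γ 0) ^ 2 = γ 0 := Real.sq_sqrt hγ0.le
  have hsL2 : Real.sqrt L ^ 2 = L := Real.sq_sqrt hL.le
  have hc0 : 0 ≤ c := div_nonneg (Real.sqrt_nonneg _) (by positivity)
  have hspos : ∀ k, 0 < s k := fun k => Real.sqrt_pos.mpr (hPpos k)
  have hsq : ∀ k, s k ^ 2 = ∏ i ∈ Finset.range k, (1 - α i) :=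
    fun k => Real.sq_sqrt (hPpos k).le
  have hsmono : ∀ k, s (k+1) ≤ s k := by
    intro k
    apply Real.sqrt_le_sqrt
    rw [Finset.prod_range_succ]
    nlinarith [mul_pos (hPpos k) (hαpos k)]
  have hc2 : c ^ 2 = γ 0 / (4 * L) := by
    rw [hc, div_pow, hsγ0, mul_pow, hsL2]
    norm_num
  have hαs : ∀ k, 2 * c * s (k+1) ≤ α k := by
    intro k
    have h1 : (∏ i ∈ Finset.range (k+1), (1 - α i)) * γ 0 ≤ L * α k ^ 2 := by
      rw [hquad k, ← hγrec k]
      exact hγP (k+1)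
    have h3 : (2 * c * s (k+1)) ^ 2 = (∏ i ∈ Finset.range (k+1), (1 - α i)) * γ 0 / L := by
      rw [show (2 * c * s (k+1)) ^ 2 = 4 * c ^ 2 * s (k+1) ^ 2 by ring, hc2, hsq (k+1)]
      field_simp
    have h2 : (2 * c * s (k+1)) ^ 2 ≤ α k ^ 2 := by
      rw [h3, div_le_iff₀ hL]
      nlinarith [h1]
    have h4 : 0 ≤ 2 * c * s (k+1) :=
      mul_nonneg (mul_nonneg (by norm_num) hc0) (hspos _).le
    nlinarith [h2, h4, hαpos k]
  have hkey : ∀ k, c * s k * s (k+1) + s (k+1) ≤ s k := by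
    intro k
    have hPsucc : s (k+1) ^ 2 = s k ^ 2 * (1 - α k) := by
      rw [hsq, hsq, Finset.prod_range_succ]
    have hA : 2 * c * s (k+1) * s k ^ 2 ≤ α k * s k ^ 2 :=
      mul_le_mul_of_nonneg_right (hαs k) (sq_nonneg _)
    have hB : α k * s k ^ 2 = s k ^ 2 - s (k+1) ^ 2 := by rw [hPsucc]; ring
    nlinarith [hA, hB, hsmono k, hspos k, hspos (k+1), sq_nonneg (s k - s (k+1)), hc0]
  have hmain : ∀ k : ℕ, s k * (1 + k * c) ≤ 1 := by
    intro k
    induction k with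
    | zero => simp [hs]
    | succ n ih =>
      have h1 : s (n+1) * (1 + c * s n) ≤ s n := by nlinarith [hkey n]
      have hE : (0:ℝ) ≤ 1 + ((n:ℝ) + 1) * c := by
        have := mul_nonneg (by positivity : (0:ℝ) ≤ (n:ℝ) + 1) hc0
        linarith
      have h3 := mul_le_mul_of_nonneg_right h1 hE
      have h4 : s n * (1 + ((n:ℝ) + 1) * c) ≤ 1 + c * s n := by nlinarith [ih]
      have hD : 0 < 1 + c * s n := by nlinarith [mul_nonneg hc0 (hspos n).le]
      have h5 : s (n+1) * (1 + ((n:ℝ) + 1) * c) * (1 + c * s n) ≤ 1 * (1 + c * s n) := by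
        nlinarith [h3, h4]
      have h6 := le_of_mul_le_mul_right h5 hD
      push_cast
      linarith [h6]
  have hbound1 : ∀ k : ℕ, (∏ i ∈ Finset.range k, (1 - α i)) ≤
      4 * L / (Real.sqrt (γ 0) * k + 2 * Real.sqrt L) ^ 2 := by
    intro k
    have hDpos : 0 < Real.sqrt (γ 0) * k + 2 * Real.sqrt L := by
      have h1 : 0 ≤ Real.sqrt (γ 0) * k := mul_nonneg (Real.sqrt_nonneg _) (Nat.cast_nonneg k)
      linarith
    rw [le_div_iff₀ (pow_pos hDpos 2)]
    have h3 : 2 * Real.sqrt L * c = Real.sqrt (γ 0) := by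
      rw [hc]
      field_simp
    have h5 : s k * (Real.sqrt (γ 0) * k + 2 * Real.sqrt L) ≤ 2 * Real.sqrt L := by
      have h2 := mul_le_mul_of_nonneg_right (hmain k) (by linarith : (0:ℝ) ≤ 2 * Real.sqrt L)
      have h4 : s k * (Real.sqrt (γ 0) * k + 2 * Real.sqrt L)
          = s k * (1 + k * c) * (2 * Real.sqrt L) := by rw [← h3]; ring
      rw [h4]
      linarith [h2]
    have h6 : 0 ≤ s k * (Real.sqrt (γ 0) * k + 2 * Real.sqrt L) :=
      mul_nonneg (hspos k).le hDpos.le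
    have h7 := mul_self_le_mul_self h6 h5
    have h8 : (∏ i ∈ Finset.range k, (1 - α i)) * (Real.sqrt (γ 0) * k + 2 * Real.sqrt L) ^ 2
        = (s k * (Real.sqrt (γ 0) * k + 2 * Real.sqrt L)) *
          (s k * (Real.sqrt (γ 0) * k + 2 * Real.sqrt L)) := by
      rw [← hsq k]; ring
    have h9 : (4:ℝ) * L = (2 * Real.sqrt L) * (2 * Real.sqrt L) := by
      linear_combination (-4 : ℝ) * hsL2
    rw [h8, h9]
    exact h7
  exact ⟨fun k => ⟨hγpos k, hαpos k, hα1 k, hsqα k⟩,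
    fun k => le_min (hbound1 k) (hbound2 k)⟩
end

section
/- Let μ ≥ 0, L > 0 with μ ≤ L, and γ_0 > 0. Define sequences (α_k)_{k≥0} and (γ_k)_{k≥0} by: α_k is the positive root of L·α_k² = γ_k(1 + α_k), and γ_{k+1} = γ_k + α_k(μ − γ_{k+1}), i.e. γ_{k+1} = (γ_k + μα_k)/(1 + α_k). Then for all k ≥ 0: γ_k > 0, α_k > 0, and α_k ≥ √(min{γ_0, μ}/L). Moreover, for all k ≥ 0, ∏_{i=0}^{k−1} 1/(1 + α_i) ≤ min{ 4L/(√γ_0·k + 2√L)², (1 + √(min{γ_0, μ}/L))^{−k} }. -/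
set_option maxHeartbeats 1000000 in
theorem stmt19 (μ L : ℝ) (hμ : 0 ≤ μ) (hμL : μ ≤ L) (hL : 0 < L)
    (γ α : ℕ → ℝ) (hγ0 : 0 < γ 0)
    (hαpos : ∀ k, 0 < α k)
    (hquad : ∀ k, L * (α k) ^ 2 = γ k * (1 + α k))
    (hγrec : ∀ k, γ (k + 1) = (γ k + μ * α k) / (1 + α k)) :
    (∀ k : ℕ, 0 < γ k ∧ 0 < α k ∧ Real.sqrt (min (γ 0) μ / L) ≤ α k) ∧
    (∀ k : ℕ, (∏ i ∈ Finset.range k, (1 + α i)⁻¹) ≤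
      min (4 * L / (Real.sqrt (γ 0) * k + 2 * Real.sqrt L) ^ 2)
        (((1 + Real.sqrt (min (γ 0) μ / L)) ^ k)⁻¹)) := by
  have hα1 : ∀ k, (0:ℝ) < 1 + α k := fun k => by linarith [hαpos k]
  have hm0 : 0 ≤ min (γ 0) μ := le_min hγ0.le hμ
  -- γ positivity and lower bound
  have hγ : ∀ k, 0 < γ k ∧ min (γ 0) μ ≤ γ k := by
    intro k
    induction k with
    | zero => exact ⟨hγ0, min_le_left _ _⟩
    | succ n ih =>
      obtain ⟨h1, h2⟩ := ih
      rw [hγrec n]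
      refine ⟨div_pos ?_ (hα1 n), ?_⟩
      · have := mul_nonneg hμ (hαpos n).le; linarith
      · rw [le_div_iff₀ (hα1 n)]
        have hmμ : min (γ 0) μ ≤ μ := min_le_right _ _
        nlinarith [hαpos n]
  -- lower bound on α
  have hαlb : ∀ k, Real.sqrt (min (γ 0) μ / L) ≤ α k := by
    intro k
    have h2 := (hγ k).2
    have hq := hquad k
    have hle : min (γ 0) μ / L ≤ (α k)^2 := by
      rw [div_le_iff₀ hL]
      nlinarith [hαpos k, (hγ k).1]
    calc Real.sqrt (min (γ 0) μ / L) ≤ Real.sqrt ((α k)^2) := Real.sqrt_le_sqrt hle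
      _ = α k := Real.sqrt_sq (hαpos k).le
  refine ⟨fun k => ⟨(hγ k).1, hαpos k, hαlb k⟩, ?_⟩
  -- lemma B : γ 0 * λ_k ≤ γ k
  have hB : ∀ k, γ 0 * ∏ i ∈ Finset.range k, (1 + α i)⁻¹ ≤ γ k := by
    intro k
    induction k with
    | zero => simp
    | succ n ih =>
      rw [Finset.prod_range_succ, ← mul_assoc]
      have hinv : (0:ℝ) ≤ (1 + α n)⁻¹ := (inv_pos.2 (hα1 n)).le
      have step1 : γ 0 * (∏ i ∈ Finset.range n, (1 + α i)⁻¹) * (1 + α n)⁻¹ ≤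
          γ n * (1 + α n)⁻¹ := mul_le_mul_of_nonneg_right ih hinv
      have step2 : γ n * (1 + α n)⁻¹ ≤ γ (n + 1) := by
        rw [hγrec n, div_eq_mul_inv]
        have : γ n ≤ γ n + μ * α n := by nlinarith [hαpos n]
        exact mul_le_mul_of_nonneg_right this hinv
      linarith
  -- P_k = ∏ √(1+α i)
  have hPnn : ∀ k, (0:ℝ) ≤ ∏ i ∈ Finset.range k, Real.sqrt (1 + α i) :=
    fun k => Finset.prod_nonneg fun i _ => Real.sqrt_nonneg _
  have hPsq : ∀ k, (∏ i ∈ Finset.range k, Real.sqrt (1 + α i))^2 =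
      ∏ i ∈ Finset.range k, (1 + α i) := by
    intro k
    rw [← Finset.prod_pow]
    exact Finset.prod_congr rfl fun i _ => Real.sq_sqrt (hα1 i).le
  have hQpos : ∀ k, (0:ℝ) < ∏ i ∈ Finset.range k, (1 + α i) :=
    fun k => Finset.prod_pos fun i _ => hα1 i
  -- lemma C : 1 + k √(γ0/L)/2 ≤ P_k
  have hC : ∀ k : ℕ, 1 + k * Real.sqrt (γ 0 / L) / 2 ≤
      ∏ i ∈ Finset.range k, Real.sqrt (1 + α i) := by
    intro k
    induction k with
    | zero => simp
    | succ n ih =>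
      rw [Finset.prod_range_succ]
      set P := ∏ i ∈ Finset.range n, Real.sqrt (1 + α i) with hP
      -- h1 : √(γ0/γ n) ≤ P
      have hγn := (hγ n).1
      have hQ : γ 0 / γ n ≤ P ^ 2 := by
        rw [hPsq n, div_le_iff₀ hγn]
        have := hB n
        have hrw : (∏ i ∈ Finset.range n, (1 + α i)⁻¹) =
            (∏ i ∈ Finset.range n, (1 + α i))⁻¹ := by
          rw [← Finset.prod_inv_distrib]
        rw [hrw] at this
        have hQp := hQpos n
        rw [mul_inv_le_iff₀ hQp] at this
        linarith [this]
      have h1 : Real.sqrt (γ 0 / γ n) ≤ P := by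
        calc Real.sqrt (γ 0 / γ n) ≤ Real.sqrt (P^2) := Real.sqrt_le_sqrt hQ
          _ = P := Real.sqrt_sq (hPnn n)
      -- h2 : √(γ n/L) ≤ 2 (√(1+α n) - 1)
      have ht : Real.sqrt (1 + α n) ^ 2 = 1 + α n := Real.sq_sqrt (hα1 n).le
      set t := Real.sqrt (1 + α n) with htd
      have ht0 : 0 ≤ t := Real.sqrt_nonneg _
      have ht1 : 1 ≤ t := by nlinarith [hαpos n]
      have h2 : Real.sqrt (γ n / L) ≤ 2 * (t - 1) := by
        have hq := hquad n
        have hq' : γ n * t ^ 2 = L * (t ^ 2 - 1) ^ 2 := by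
          rw [ht]; nlinarith [hq]
        have hkey : γ n / L ≤ (2 * (t - 1))^2 := by
          rw [div_le_iff₀ hL]
          have ht2 : (0:ℝ) < t ^ 2 := by positivity
          have : γ n * t ^ 2 ≤ (2 * (t-1))^2 * L * t ^ 2 := by
            rw [hq']
            nlinarith [mul_nonneg (mul_nonneg hL.le (pow_nonneg (by linarith : (0:ℝ) ≤ t - 1) 3)) (by linarith : (0:ℝ) ≤ 3*t + 1)]
          have := le_of_mul_le_mul_right (by linarith [this] :
            γ n * t ^ 2 ≤ (2 * (t-1))^2 * L * t ^ 2) ht2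
          linarith
        calc Real.sqrt (γ n / L) ≤ Real.sqrt ((2 * (t - 1))^2) := Real.sqrt_le_sqrt hkey
          _ = 2 * (t - 1) := Real.sqrt_sq (by linarith)
      -- combine
      have hprod : Real.sqrt (γ 0 / γ n) * Real.sqrt (γ n / L) = Real.sqrt (γ 0 / L) := by
        rw [← Real.sqrt_mul (by positivity)]
        congr 1
        field_simp
      have hmul : Real.sqrt (γ 0 / L) ≤ P * (2 * (t - 1)) := by
        rw [← hprod]
        exact mul_le_mul h1 h2 (Real.sqrt_nonneg _) (hPnn n)
      push_cast
      nlinarith [hmul, ih]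
  intro k
  refine le_min ?_ ?_
  · -- first bound
    have hc0 : (0:ℝ) < 1 + k * Real.sqrt (γ 0 / L) / 2 := by positivity
    have hrw : (∏ i ∈ Finset.range k, (1 + α i)⁻¹) =
        ((∏ i ∈ Finset.range k, Real.sqrt (1 + α i))^2)⁻¹ := by
      rw [hPsq k, ← Finset.prod_inv_distrib]
    have hle : (∏ i ∈ Finset.range k, (1 + α i)⁻¹) ≤
        ((1 + k * Real.sqrt (γ 0 / L) / 2)^2)⁻¹ := by
      rw [hrw]
      have hC' := hC k
      have : (1 + k * Real.sqrt (γ 0 / L) / 2)^2 ≤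
          (∏ i ∈ Finset.range k, Real.sqrt (1 + α i))^2 :=
        pow_le_pow_left₀ hc0.le hC' 2
      exact inv_anti₀ (by positivity) this
    refine hle.trans (le_of_eq ?_)
    have ha : Real.sqrt (γ 0) ^ 2 = γ 0 := Real.sq_sqrt hγ0.le
    have hb : Real.sqrt L ^ 2 = L := Real.sq_sqrt hL.le
    have hbpos : 0 < Real.sqrt L := Real.sqrt_pos.2 hL
    have hdiv : Real.sqrt (γ 0 / L) = Real.sqrt (γ 0) / Real.sqrt L :=
      Real.sqrt_div hγ0.le L
    have hkey : 2 * Real.sqrt L * (1 + k * Real.sqrt (γ 0 / L) / 2) =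
        Real.sqrt (γ 0) * k + 2 * Real.sqrt L := by
      rw [hdiv]; field_simp; ring
    have hsq : (Real.sqrt (γ 0) * k + 2 * Real.sqrt L)^2 =
        4 * L * (1 + k * Real.sqrt (γ 0 / L) / 2)^2 := by
      rw [← hkey]; nlinarith [hb]
    rw [hsq]
    rw [eq_div_iff (by positivity)]
    field_simp
  · -- second bound
    have hs : (0:ℝ) ≤ Real.sqrt (min (γ 0) μ / L) := Real.sqrt_nonneg _
    have hstep : ∀ i ∈ Finset.range k, (1 + α i)⁻¹ ≤ (1 + Real.sqrt (min (γ 0) μ / L))⁻¹ := by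
      intro i _
      exact inv_anti₀ (by linarith) (by linarith [hαlb i])
    have h1 : (∏ i ∈ Finset.range k, (1 + α i)⁻¹) ≤
        ∏ _i ∈ Finset.range k, (1 + Real.sqrt (min (γ 0) μ / L))⁻¹ := by
      apply Finset.prod_le_prod
      · intro i _
        exact (inv_pos.2 (hα1 i)).le
      · exact hstep
    rwa [Finset.prod_const, Finset.card_range, inv_pow] at h1
end
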